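/- Let $R$ and $S$ be commutative algebras over a field $k$, $I \subseteq R$ and $J \subseteq S$ ideals, $T = R \otimes_k S$, and $P = I + J$ (extensions to $T$). Then for all non-negative integers $p, q, r, s$ one has $I^{p+r}J^q \cap I^r J^{s+q} = I^{p+r}P^q \cap I^r J^{s+q} = I^{p+r}J^{s+q}$ as ideals of $T$. -/

import Mathlib

set_option linter.unnecessarySimpa false

open TensorProduct

section Aux

variable {k R S : Type*} [Field k] [CommRing R] [CommRing S] [Algebra k R] [Algebra k S]

/-- The `k`-span of left-sided pure tensors `a ⊗ s` with `a ∈ A`. -/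
private def leftSpan (A : Ideal R) : Submodule k (R ⊗[k] S) :=
  Submodule.span k {y | ∃ a ∈ A, ∃ s : S, y = a ⊗ₜ[k] s}

/-- The `k`-span of right-sided pure tensors `r ⊗ b` with `b ∈ B`. -/
private def rightSpan (B : Ideal S) : Submodule k (R ⊗[k] S) :=
  Submodule.span k {y | ∃ b ∈ B, ∃ r : R, y = r ⊗ₜ[k] b}

private theorem leftSpan_mul_mem (A : Ideal R) (t : R ⊗[k] S) {x : R ⊗[k] S}
    (hx : x ∈ leftSpan (k := k) (S := S) A) : t * x ∈ leftSpan (k := k) (S := S) A := by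
  induction t using TensorProduct.induction_on with
  | zero => simpa using (leftSpan (k := k) (S := S) A).zero_mem
  | tmul r s =>
    induction hx using Submodule.span_induction with
    | mem y hy =>
      obtain ⟨a, ha, s', rfl⟩ := hy
      rw [Algebra.TensorProduct.tmul_mul_tmul]
      exact Submodule.subset_span ⟨r * a, A.mul_mem_left r ha, s * s', rfl⟩
    | zero => simpa using (leftSpan (k := k) (S := S) A).zero_mem
    | add y z _ _ hy hz => rw [mul_add]; exact Submodule.add_mem _ hy hz
    | smul c y _ hy => rw [mul_smul_comm]; exact Submodule.smul_mem _ c hy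
  | add t₁ t₂ h₁ h₂ => rw [add_mul]; exact Submodule.add_mem _ h₁ h₂

private theorem rightSpan_mul_mem (B : Ideal S) (t : R ⊗[k] S) {x : R ⊗[k] S}
    (hx : x ∈ rightSpan (k := k) (R := R) B) : t * x ∈ rightSpan (k := k) (R := R) B := by
  induction t using TensorProduct.induction_on with
  | zero => simpa using (rightSpan (k := k) (R := R) B).zero_mem
  | tmul r s =>
    induction hx using Submodule.span_induction with
    | mem y hy =>
      obtain ⟨b, hb, r', rfl⟩ := hy
      rw [Algebra.TensorProduct.tmul_mul_tmul]
      exact Submodule.subset_span ⟨s * b, B.mul_mem_left s hb, r * r', rfl⟩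
    | zero => simpa using (rightSpan (k := k) (R := R) B).zero_mem
    | add y z _ _ hy hz => rw [mul_add]; exact Submodule.add_mem _ hy hz
    | smul c y _ hy => rw [mul_smul_comm]; exact Submodule.smul_mem _ c hy
  | add t₁ t₂ h₁ h₂ => rw [add_mul]; exact Submodule.add_mem _ h₁ h₂

private theorem map_le_leftSpan (A : Ideal R) {x : R ⊗[k] S}
    (hx : x ∈ A.map (algebraMap R (R ⊗[k] S))) : x ∈ leftSpan (k := k) (S := S) A := by
  rw [Ideal.map] at hx
  induction hx using Submodule.span_induction with
  | mem y hy =>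
    obtain ⟨a, ha, rfl⟩ := hy
    exact Submodule.subset_span ⟨a, ha, 1, rfl⟩
  | zero => exact (leftSpan A).zero_mem
  | add y z _ _ hy hz => exact Submodule.add_mem _ hy hz
  | smul t y _ hy => rw [smul_eq_mul]; exact leftSpan_mul_mem A t hy

private theorem map_le_rightSpan (B : Ideal S) {x : R ⊗[k] S}
    (hx : x ∈ B.map ((Algebra.TensorProduct.includeRight : S →ₐ[k] R ⊗[k] S) : S →+* R ⊗[k] S)) :
    x ∈ rightSpan (k := k) (R := R) B := by
  rw [Ideal.map] at hx
  induction hx using Submodule.span_induction with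
  | mem y hy =>
    obtain ⟨b, hb, rfl⟩ := hy
    exact Submodule.subset_span ⟨b, hb, 1, rfl⟩
  | zero => exact (rightSpan B).zero_mem
  | add y z _ _ hy hz => exact Submodule.add_mem _ hy hz
  | smul t y _ hy => rw [smul_eq_mul]; exact rightSpan_mul_mem B t hy

/-- Key lemma: over a field, the intersection of the extensions of `A` and `B` to the
tensor product is contained in their product. -/
private theorem inf_le_mul_key (A : Ideal R) (B : Ideal S) :
    A.map (algebraMap R (R ⊗[k] S)) ⊓
      B.map ((Algebra.TensorProduct.includeRight : S →ₐ[k] R ⊗[k] S) : S →+* R ⊗[k] S) ≤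
    A.map (algebraMap R (R ⊗[k] S)) *
      B.map ((Algebra.TensorProduct.includeRight : S →ₐ[k] R ⊗[k] S) : S →+* R ⊗[k] S) := by
  classical
  set U : Submodule k R := A.restrictScalars k
  set V : Submodule k S := B.restrictScalars k
  obtain ⟨U', hU'⟩ := Submodule.exists_isCompl U
  obtain ⟨V', hV'⟩ := Submodule.exists_isCompl V
  set pr : R →ₗ[k] R := U.subtype ∘ₗ Submodule.linearProjOfIsCompl U U' hU'
  set qr : S →ₗ[k] S := V.subtype ∘ₗ Submodule.linearProjOfIsCompl V V' hV'
  have hpmem : ∀ x : R, pr x ∈ A := fun x => (Submodule.linearProjOfIsCompl U U' hU' x).2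
  have hqmem : ∀ x : S, qr x ∈ B := fun x => (Submodule.linearProjOfIsCompl V V' hV' x).2
  have hpfix : ∀ x ∈ A, pr x = x := fun x hx => by
    simp only [pr, LinearMap.comp_apply, Submodule.coe_subtype]
    exact congrArg Subtype.val (Submodule.linearProjOfIsCompl_apply_left hU' ⟨x, hx⟩)
  have hqfix : ∀ x ∈ B, qr x = x := fun x hx => by
    simp only [qr, LinearMap.comp_apply, Submodule.coe_subtype]
    exact congrArg Subtype.val (Submodule.linearProjOfIsCompl_apply_left hV' ⟨x, hx⟩)
  set F : R ⊗[k] S →ₗ[k] R ⊗[k] S := TensorProduct.map pr LinearMap.id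
  set G : R ⊗[k] S →ₗ[k] R ⊗[k] S := TensorProduct.map LinearMap.id qr
  have hF : ∀ x ∈ leftSpan (k := k) (S := S) A, F x = x := by
    intro x hx
    induction hx using Submodule.span_induction with
    | mem y hy =>
      obtain ⟨a, ha, s, rfl⟩ := hy
      simp [F, TensorProduct.map_tmul, hpfix a ha]
    | zero => simp
    | add y z _ _ hy hz => rw [map_add, hy, hz]
    | smul c y _ hy => rw [map_smul, hy]
  have hG : ∀ x ∈ rightSpan (k := k) (R := R) B, G x = x := by
    intro x hx
    induction hx using Submodule.span_induction with
    | mem y hy =>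
      obtain ⟨b, hb, r, rfl⟩ := hy
      simp [G, TensorProduct.map_tmul, hqfix b hb]
    | zero => simp
    | add y z _ _ hy hz => rw [map_add, hy, hz]
    | smul c y _ hy => rw [map_smul, hy]
  have hH : ∀ x : R ⊗[k] S, F (G x) ∈
      A.map (algebraMap R (R ⊗[k] S)) *
        B.map ((Algebra.TensorProduct.includeRight : S →ₐ[k] R ⊗[k] S) : S →+* R ⊗[k] S) := by
    intro x
    induction x using TensorProduct.induction_on with
    | zero => simp
    | tmul r s =>
      simp only [F, G, TensorProduct.map_tmul, LinearMap.id_apply]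
      have : (pr r : R) ⊗ₜ[k] (qr s : S) =
          algebraMap R (R ⊗[k] S) (pr r) *
          ((Algebra.TensorProduct.includeRight : S →ₐ[k] R ⊗[k] S) : S →+* R ⊗[k] S) (qr s) := by
        simp [Algebra.TensorProduct.algebraMap_apply, Algebra.TensorProduct.tmul_mul_tmul]
      rw [this]
      exact Ideal.mul_mem_mul (Ideal.mem_map_of_mem _ (hpmem r)) (Ideal.mem_map_of_mem _ (hqmem s))
    | add y z hy hz => rw [map_add, map_add]; exact Ideal.add_mem _ hy hz
  rintro x ⟨hxA, hxB⟩
  have h1 : G x = x := hG x (map_le_rightSpan B hxB)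
  have h2 : F x = x := hF x (map_le_leftSpan A hxA)
  have := hH x
  rwa [h1, h2] at this

end Aux

/-- Let `R` and `S` be commutative algebras over a field `k`, `I ⊆ R` and `J ⊆ S` ideals,
`T = R ⊗[k] S`, and `P = I + J` (extensions to `T`).  Then for all `p q r s : ℕ`,
`I^(p+r) J^q ⊓ I^r J^(s+q) = I^(p+r) P^q ⊓ I^r J^(s+q) = I^(p+r) J^(s+q)` as ideals of `T`. -/
theorem power_products_inf_eq {k R S : Type*} [Field k] [CommRing R] [CommRing S]
    [Algebra k R] [Algebra k S] (I : Ideal R) (J : Ideal S)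
    (I' J' P : Ideal (R ⊗[k] S))
    (hI' : I' = I.map (algebraMap R (R ⊗[k] S)))
    (hJ' : J' = J.map ((Algebra.TensorProduct.includeRight : S →ₐ[k] R ⊗[k] S) : S →+* R ⊗[k] S))
    (hP : P = I' + J') (p q r s : ℕ) :
    I' ^ (p + r) * J' ^ q ⊓ I' ^ r * J' ^ (s + q) = I' ^ (p + r) * P ^ q ⊓ I' ^ r * J' ^ (s + q)
      ∧ I' ^ (p + r) * P ^ q ⊓ I' ^ r * J' ^ (s + q) = I' ^ (p + r) * J' ^ (s + q) := by
  have key : I' ^ (p + r) ⊓ J' ^ (s + q) ≤ I' ^ (p + r) * J' ^ (s + q) := by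
    rw [hI', hJ', ← Ideal.map_pow, ← Ideal.map_pow]
    exact inf_le_mul_key (I ^ (p + r)) (J ^ (s + q))
  have lo : I' ^ (p + r) * J' ^ (s + q) ≤ I' ^ (p + r) * J' ^ q ⊓ I' ^ r * J' ^ (s + q) :=
    le_inf (Ideal.mul_mono_right (Ideal.pow_le_pow_right (Nat.le_add_left q s)))
      (Ideal.mul_mono_left (Ideal.pow_le_pow_right (Nat.le_add_left r p)))
  have mid : I' ^ (p + r) * J' ^ q ⊓ I' ^ r * J' ^ (s + q) ≤
      I' ^ (p + r) * P ^ q ⊓ I' ^ r * J' ^ (s + q) := by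
    refine inf_le_inf (Ideal.mul_mono_right (Ideal.pow_right_mono ?_ q)) le_rfl
    rw [hP, Ideal.add_eq_sup]
    exact le_sup_right
  have hi : I' ^ (p + r) * P ^ q ⊓ I' ^ r * J' ^ (s + q) ≤ I' ^ (p + r) * J' ^ (s + q) := by
    refine le_trans (inf_le_inf Ideal.mul_le_left Ideal.mul_le_right) key
  exact ⟨le_antisymm mid (le_trans hi lo), le_antisymm hi (le_trans lo mid)⟩
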